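/- Let Δ be a monotone game and let β ∈ ℝⁿ be a maximizer of ∑_{i ∈ N} β'_i over all β' ∈ ℝⁿ satisfying ∑_{i ∈ S} β'_i ≤ Δ(S) for every S ⊆ N (a Minimal Ex-post Rational blame assignment). Then β satisfies: (validity) ∑_{i ∈ N} β_i ≤ Δ(N); (rationality) ∑_{i ∈ S} β_i ≤ Δ(S) for every S ⊆ N; and (invariance) β_i = 0 for every agent i such that Δ(S ∪ {i}) = Δ(S) for every S ⊆ N. -/

import Mathlib

open Finset

/-- A monotone game on agent set `Fin n`: `u ∅ = 0` and `u` is monotone w.r.t. inclusion. -/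
def IsMonotoneGame (n : ℕ) (u : Finset (Fin n) → ℝ) : Prop :=
  u ∅ = 0 ∧ ∀ S T : Finset (Fin n), S ⊆ T → u S ≤ u T

/-- Any Minimal Ex-post Rational blame assignment (a maximizer of total blame subject to the
ex-post rationality constraints) satisfies validity, rationality and invariance. -/
theorem mer_validity_rationality_invariance (n : ℕ) (hn : 1 ≤ n)
    (Δ : Finset (Fin n) → ℝ) (hΔ : IsMonotoneGame n Δ)
    (β : Fin n → ℝ)
    (hfeas : ∀ S : Finset (Fin n), ∑ i ∈ S, β i ≤ Δ S)
    (hmax : ∀ β' : Fin n → ℝ,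
      (∀ S : Finset (Fin n), ∑ i ∈ S, β' i ≤ Δ S) → ∑ i, β' i ≤ ∑ i, β i) :
    (∑ i, β i ≤ Δ Finset.univ) ∧
    (∀ S : Finset (Fin n), ∑ i ∈ S, β i ≤ Δ S) ∧
    (∀ i : Fin n, (∀ S : Finset (Fin n), Δ (insert i S) = Δ S) → β i = 0) := by
  obtain ⟨h0, hmono⟩ := hΔ
  refine ⟨hfeas univ, hfeas, ?_⟩
  intro i hi
  have hle : β i ≤ 0 := by
    have h1 : Δ {i} = 0 := by
      have := hi ∅; rw [LawfulSingleton.insert_empty_eq] at this; rw [this, h0]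
    simpa [h1] using hfeas {i}
  have hge : 0 ≤ β i := by
    set β' : Fin n → ℝ := Function.update β i 0 with hβ'
    have hfeas' : ∀ S : Finset (Fin n), ∑ j ∈ S, β' j ≤ Δ S := by
      intro S
      by_cases hiS : i ∈ S
      · have hsum : ∑ j ∈ S, β' j = ∑ j ∈ S.erase i, β j := by
          rw [← Finset.sum_erase_add _ _ hiS]
          simp [hβ', Function.update_apply]
          exact Finset.sum_congr rfl fun j hj =>
            if_neg (Finset.ne_of_mem_erase hj)
        rw [hsum]
        exact le_trans (hfeas _) (hmono _ _ (Finset.erase_subset _ _))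
      · have hsum : ∑ j ∈ S, β' j = ∑ j ∈ S, β j :=
          Finset.sum_congr rfl fun j hj =>
            Function.update_of_ne (fun h : j = i => hiS (h ▸ hj)) _ _
        rw [hsum]; exact hfeas S
    have hmax' := hmax β' hfeas'
    have : ∑ j, β' j = ∑ j, β j - β i := by
      rw [← Finset.sum_erase_add _ β' (Finset.mem_univ i),
          ← Finset.sum_erase_add _ β (Finset.mem_univ i)]
      have : ∑ j ∈ univ.erase i, β' j = ∑ j ∈ univ.erase i, β j :=
        Finset.sum_congr rfl fun j hj => by
          simp [hβ', Function.update_apply, Finset.ne_of_mem_erase hj]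
      rw [this]
      simp [hβ']
    linarith [hmax β' hfeas', this ▸ hmax β' hfeas']
  linarith
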